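/- Let k be a field, V a k-vector space, and ř a linear endomorphism of V ⊗ V satisfying the braid relation (ř ⊗ id)(id ⊗ ř)(ř ⊗ id) = (id ⊗ ř)(ř ⊗ id)(id ⊗ ř) on V ⊗ V ⊗ V and the involutivity condition ř ∘ ř = id. Let P be the flip operator on V ⊗ V (P(v ⊗ w) = w ⊗ v) and for λ ∈ k define R(λ) := λ·(P ∘ ř) + P. Then the unitarity property holds: R(λ) ∘ (P ∘ R(-λ) ∘ P) = (1 - λ²)·id on V ⊗ V. -/

import Mathlib

open TensorProduct

/-- The endomorphism of `V ⊗ V ⊗ V` acting as `f` on the first two tensor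
factors and as the identity on the third. -/
noncomputable def tensor12 (k : Type*) [Field k] (V : Type*) [AddCommGroup V] [Module k V]
    (f : V ⊗[k] V →ₗ[k] V ⊗[k] V) : V ⊗[k] (V ⊗[k] V) →ₗ[k] V ⊗[k] (V ⊗[k] V) :=
  (TensorProduct.assoc k V V V).toLinearMap ∘ₗ
    TensorProduct.map f LinearMap.id ∘ₗ (TensorProduct.assoc k V V V).symm.toLinearMap

/-- The endomorphism of `V ⊗ V ⊗ V` acting as `f` on the last two tensor
factors and as the identity on the first. -/
noncomputable def tensor23 (k : Type*) [Field k] (V : Type*) [AddCommGroup V] [Module k V]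
    (f : V ⊗[k] V →ₗ[k] V ⊗[k] V) : V ⊗[k] (V ⊗[k] V) →ₗ[k] V ⊗[k] (V ⊗[k] V) :=
  TensorProduct.map LinearMap.id f

/-- for an involutive solution `rb` of the braid relation, the
Baxterized matrix `R(λ) = λ (P ∘ rb) + P` satisfies the unitarity property
`R(λ) ∘ (P ∘ R(-λ) ∘ P) = (1 - λ²) id`. -/
theorem stmt_6 {k : Type*} [Field k] {V : Type*} [AddCommGroup V] [Module k V]
    (rb : V ⊗[k] V →ₗ[k] V ⊗[k] V)
    (hbraid : tensor12 k V rb ∘ₗ tensor23 k V rb ∘ₗ tensor12 k V rb =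
      tensor23 k V rb ∘ₗ tensor12 k V rb ∘ₗ tensor23 k V rb)
    (hinvol : rb ∘ₗ rb = LinearMap.id)
    (P : V ⊗[k] V →ₗ[k] V ⊗[k] V)
    (hP : P = (TensorProduct.comm k V V).toLinearMap)
    (R : k → (V ⊗[k] V →ₗ[k] V ⊗[k] V))
    (hR : ∀ lam : k, R lam = lam • (P ∘ₗ rb) + P) :
    ∀ lam : k, R lam ∘ₗ (P ∘ₗ R (-lam) ∘ₗ P) = (1 - lam ^ 2) • LinearMap.id := by
  intro lam
  have hPP : P * P = 1 := by
    subst hP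
    apply TensorProduct.ext'
    intro x y
    simp [Module.End.mul_apply]
  have hr : rb * rb = 1 := hinvol
  have hprr : P * rb * rb = P := by rw [mul_assoc, hr, mul_one]
  show R lam * (P * (R (-lam) * P)) = (1 - lam ^ 2) • 1
  rw [hR, hR]
  show (lam • (P * rb) + P) * (P * (((-lam) • (P * rb) + P) * P)) = (1 - lam ^ 2) • 1
  simp only [mul_add, add_mul, mul_smul_comm, smul_mul_assoc, smul_smul, ← mul_assoc, hPP,
    one_mul, mul_one, hprr]
  simp [sub_smul, add_smul, smul_smul]
  ring_nf
  module
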